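/- Let W be a finite subgroup of O(n) generated by reflections, let v₀ ∈ ℝⁿ satisfy gv₀ ≠ v₀ for all g ∈ W \ {e}, and let Λ = ⋂_{g ∈ W} {v ∈ ℝⁿ : ⟨v, v₀⟩ ≥ ⟨v, gv₀⟩} be the corresponding Dirichlet domain. Then every W-orbit in ℝⁿ meets Λ in exactly one point, and consequently the restriction of the quotient map ℝⁿ → ℝⁿ/W to Λ is a homeomorphism from Λ (with the subspace topology) onto the orbit space ℝⁿ/W (with the quotient topology). -/

import Mathlib

open Metric

noncomputable section

/-- Euclidean `n`-space. -/
abbrev Euc (n : ℕ) := EuclideanSpace ℝ (Fin n)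

/-- The orthogonal group `O(n)`, realized as the group of linear isometric
self-equivalences of Euclidean `n`-space. -/
abbrev Orth (n : ℕ) := Euc n ≃ₗᵢ[ℝ] Euc n

instance {n : ℕ} : MulAction (Orth n) (Euc n) where
  smul g x := g x
  one_smul _ := rfl
  mul_smul _ _ _ := rfl

instance {n : ℕ} : MulAction (Orth n) (sphere (0 : Euc n) 1) where
  smul g x := ⟨g x, by
    have hx := x.2
    simp only [mem_sphere_iff_norm, sub_zero] at hx ⊢
    rw [g.norm_map]; exact hx⟩
  one_smul x := Subtype.ext rfl
  mul_smul _ _ _ := Subtype.ext rfl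

/-- The fixed-point subspace `{v : gv = v}` of an orthogonal transformation. -/
def fixedSubspace {n : ℕ} (g : Orth n) : Submodule ℝ (Euc n) :=
  LinearMap.ker ((g.toLinearEquiv : Euc n →ₗ[ℝ] Euc n) - LinearMap.id)

/-- A reflection: an orthogonal transformation whose fixed-point subspace has
dimension `n - 1` (codimension one). -/
def IsReflection {n : ℕ} (g : Orth n) : Prop :=
  Module.finrank ℝ (fixedSubspace g) + 1 = n

/-- A rotation: an orthogonal transformation whose fixed-point subspace has
dimension `n - 2` (codimension two). -/
def IsRotation {n : ℕ} (g : Orth n) : Prop :=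
  Module.finrank ℝ (fixedSubspace g) + 2 = n

/-- The Dirichlet domain of a finite subgroup `G ≤ O(n)` with respect to a point
`v₀`: the set `⋂_{g ∈ G} {v : ⟨v, v₀⟩ ≥ ⟨v, g v₀⟩}`. -/
def dirichletDomain (n : ℕ) (G : Subgroup (Orth n)) (v₀ : Euc n) : Set (Euc n) :=
  ⋂ g ∈ G, {v : Euc n | (inner ℝ v (g • v₀) : ℝ) ≤ inner ℝ v v₀}

section
open RealInnerProductSpace

namespace Stmt11
open RealInnerProductSpace
variable {n : ℕ}

lemma orth_smul (g : Orth n) (x : Euc n) : g • x = g x := rfl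

lemma mem_fixed {g : Orth n} {x : Euc n} : x ∈ fixedSubspace g ↔ g x = x := by
  simp only [fixedSubspace, LinearMap.mem_ker, LinearMap.sub_apply, LinearMap.id_apply,
    sub_eq_zero]
  rfl

def rHom (u : Euc n) : Euc n →ₗ[ℝ] Euc n where
  toFun x := x - (2 * ⟪x, u⟫) • u
  map_add' x y := by simp only [inner_add_left]; module
  map_smul' c x := by simp only [real_inner_smul_left, RingHom.id_apply]; module

lemma rHom_invol (u : Euc n) (hu : ‖u‖ = 1) : Function.Involutive (rHom u) := by
  intro x
  have huu : ⟪u, u⟫ = 1 := by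
    rw [real_inner_self_eq_norm_sq, hu]; norm_num
  simp only [rHom, LinearMap.coe_mk, AddHom.coe_mk]
  rw [inner_sub_left, real_inner_smul_left, huu]
  module

def rofl (u : Euc n) : Orth n :=
  if hu : ‖u‖ = 1 then
    { toLinearEquiv := LinearEquiv.ofInvolutive (rHom u) (rHom_invol u hu)
      norm_map' := by
        intro x
        have h2 : ‖rHom u x‖ ^ 2 = ‖x‖ ^ 2 := by
          simp only [rHom, LinearMap.coe_mk, AddHom.coe_mk]
          rw [norm_sub_sq_real, real_inner_smul_right, norm_smul, hu, mul_one,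
            Real.norm_eq_abs, sq_abs]
          ring
        have := norm_nonneg (rHom u x)
        have := norm_nonneg x
        have : ‖rHom u x‖ = ‖x‖ := by nlinarith
        exact this }
  else 1

lemma rofl_apply {u : Euc n} (hu : ‖u‖ = 1) (x : Euc n) :
    rofl u x = x - (2 * ⟪x, u⟫) • u := by
  simp [rofl, hu]; rfl

end Stmt11


end
section
open RealInnerProductSpace
namespace Stmt11
variable {n : ℕ}

lemma orth_ext {g h : Orth n} (H : ∀ x, g x = h x) : g = h :=
  LinearIsometryEquiv.ext H

lemma rofl_invol {u : Euc n} (hu : ‖u‖ = 1) (x : Euc n) : rofl u (rofl u x) = x := by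
  rw [rofl_apply hu, rofl_apply hu]
  have huu : ⟪u, u⟫ = 1 := by rw [real_inner_self_eq_norm_sq, hu]; norm_num
  rw [inner_sub_left, real_inner_smul_left, huu]
  module

lemma rofl_mul_self {u : Euc n} (hu : ‖u‖ = 1) : rofl u * rofl u = 1 :=
  orth_ext fun x => rofl_invol hu x

lemma rofl_inv {u : Euc n} (hu : ‖u‖ = 1) : (rofl u)⁻¹ = rofl u := by
  rw [inv_eq_iff_mul_eq_one, rofl_mul_self hu]

lemma rofl_self {u : Euc n} (hu : ‖u‖ = 1) : rofl u u = -u := by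
  have huu : ⟪u, u⟫ = 1 := by rw [real_inner_self_eq_norm_sq, hu]; norm_num
  rw [rofl_apply hu, huu]; module

lemma unit_ne_zero {u : Euc n} (hu : ‖u‖ = 1) : u ≠ 0 :=
  fun h0 => by rw [h0] at hu; simp at hu

lemma rofl_fix {u x : Euc n} (hu : ‖u‖ = 1) (hx : ⟪x, u⟫ = 0) : rofl u x = x := by
  rw [rofl_apply hu, hx]; simp

lemma rofl_ne_one {u : Euc n} (hu : ‖u‖ = 1) : rofl u ≠ 1 := by
  intro h
  have h1 : u = -u := by
    have := rofl_self hu; rw [h] at this; exact this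
  have h2 : u + u = 0 := by nth_rewrite 2 [h1]; abel
  have h3 : (2 : ℝ) • u = 0 := by rw [two_smul]; exact h2
  rcases smul_eq_zero.1 h3 with h | h
  · norm_num at h
  · exact unit_ne_zero hu h

lemma rofl_neg (u : Euc n) : rofl (-u) = rofl u := by
  by_cases hu : ‖u‖ = 1
  · have hnu : ‖(-u : Euc n)‖ = 1 := by rwa [norm_neg]
    apply orth_ext; intro x
    rw [rofl_apply hu, rofl_apply hnu, inner_neg_right]
    module
  · have hnu : ¬ ‖(-u : Euc n)‖ = 1 := by rwa [norm_neg]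
    simp [rofl, hu, hnu]

lemma rofl_conj (g : Orth n) {u : Euc n} (hu : ‖u‖ = 1) :
    rofl (g u) = g * rofl u * g⁻¹ := by
  have hgu : ‖g u‖ = 1 := by rw [g.norm_map]; exact hu
  apply orth_ext; intro x
  show rofl (g u) x = g (rofl u (g⁻¹ x))
  rw [rofl_apply hgu, rofl_apply hu]
  have h1 : ⟪(g⁻¹ : Orth n) x, u⟫ = ⟪x, g u⟫ := by
    have := g.inner_map_map ((g⁻¹ : Orth n) x) u
    rw [show g ((g⁻¹ : Orth n) x) = x from g.apply_symm_apply x] at this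
    exact this.symm
  rw [map_sub, map_smul, h1]
  congr 1
  exact (g.apply_symm_apply x).symm

lemma fixed_rofl {u : Euc n} (hu : ‖u‖ = 1) :
    fixedSubspace (rofl u) = (ℝ ∙ u)ᗮ := by
  ext x
  rw [mem_fixed, Submodule.mem_orthogonal_singleton_iff_inner_right]
  constructor
  · intro h
    rw [rofl_apply hu] at h
    have h2 : (2 * ⟪x, u⟫) • u = 0 := sub_eq_self.mp h
    rcases smul_eq_zero.1 h2 with h3 | h3
    · rw [real_inner_comm]; linarith
    · exact absurd h3 (unit_ne_zero hu)
  · intro h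
    rw [real_inner_comm] at h
    exact rofl_fix hu h

lemma finrank_euc : Module.finrank ℝ (Euc n) = n := by
  simp [finrank_euclideanSpace]

lemma isReflection_rofl {u : Euc n} (hu : ‖u‖ = 1) : IsReflection (rofl u) := by
  unfold IsReflection
  rw [fixed_rofl hu]
  have h2 : Module.finrank ℝ (ℝ ∙ u)ᗮ = n - 1 :=
    Submodule.finrank_add_finrank_orthogonal' (by
      rw [finrank_span_singleton (unit_ne_zero hu), finrank_euc]
      have : 1 ≤ n := by
        by_contra h
        interval_cases n
        exact unit_ne_zero hu (Subsingleton.elim _ _)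
      omega)
  rw [h2]
  have : 1 ≤ n := by
    by_contra h
    interval_cases n
    exact unit_ne_zero hu (Subsingleton.elim _ _)
  omega

lemma isReflection_exists {g : Orth n} (hg : IsReflection g) :
    ∃ u : Euc n, ‖u‖ = 1 ∧ g = rofl u := by
  set F := fixedSubspace g with hF
  have hodim : Module.finrank ℝ Fᗮ = 1 :=
    Submodule.finrank_add_finrank_orthogonal' (by rw [finrank_euc]; exact hg)
  -- find a unit vector spanning Fᗮ
  have hpos : 0 < Module.finrank ℝ Fᗮ := by omega
  obtain ⟨v, hv, hv0⟩ : ∃ v : Euc n, v ∈ Fᗮ ∧ v ≠ 0 := by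
    apply Submodule.exists_mem_ne_zero_of_ne_bot
    intro hbot
    rw [hbot] at hodim
    simp at hodim
  set u : Euc n := ‖v‖⁻¹ • v with hu_def
  have hvnorm : ‖v‖ ≠ 0 := norm_ne_zero_iff.2 hv0
  have hu : ‖u‖ = 1 := by
    rw [hu_def, norm_smul, norm_inv, norm_norm, inv_mul_cancel₀ hvnorm]
  have huF : u ∈ Fᗮ := Submodule.smul_mem _ _ hv
  have hspan : Fᗮ = ℝ ∙ u := by
    apply (Submodule.eq_of_le_of_finrank_le (Submodule.span_le.2 ?_) ?_).symm
    · intro x hx; rcases hx with rfl; exact huF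
    · rw [hodim, finrank_span_singleton (unit_ne_zero hu)]
  have hFperp : F = (ℝ ∙ u)ᗮ := by
    rw [← hspan, Submodule.orthogonal_orthogonal]
  -- g maps Fᗮ to itself
  have hgperp : ∀ y ∈ Fᗮ, g y ∈ Fᗮ := by
    intro y hy
    rw [Submodule.mem_orthogonal]
    intro f hf
    have hfix : g f = f := mem_fixed.mp hf
    have := g.inner_map_map y f
    rw [hfix] at this
    rw [real_inner_comm, this]
    exact Submodule.mem_orthogonal' _ _ |>.mp hy f hf
  have hgu : g u = -u := by
    have hmem := hgperp u huF
    rw [hspan, Submodule.mem_span_singleton] at hmem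
    obtain ⟨c, hc⟩ := hmem
    have hnc : ‖g u‖ = 1 := by rw [g.norm_map]; exact hu
    rw [← hc] at hnc
    rw [norm_smul, hu, mul_one, Real.norm_eq_abs] at hnc
    rcases abs_eq (by norm_num : (0:ℝ) ≤ 1) |>.mp hnc with h1 | h1
    · exfalso
      rw [h1, one_smul] at hc
      have : u ∈ F := mem_fixed.mpr hc.symm
      have : ⟪u, u⟫ = 0 := by
        rw [hFperp] at this
        exact Submodule.mem_orthogonal_singleton_iff_inner_right.mp this
      rw [real_inner_self_eq_norm_sq, hu] at this
      norm_num at this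
    · rw [h1] at hc; rw [← hc]; module
  refine ⟨u, hu, ?_⟩
  apply orth_ext
  intro x
  have hp : x - ⟪x, u⟫ • u ∈ F := by
    rw [hFperp, Submodule.mem_orthogonal_singleton_iff_inner_right]
    rw [inner_sub_right, real_inner_smul_right]
    have huu : ⟪u, u⟫ = 1 := by rw [real_inner_self_eq_norm_sq, hu]; norm_num
    rw [huu, real_inner_comm]
    ring
  have hgp : g (x - ⟪x, u⟫ • u) = x - ⟪x, u⟫ • u := mem_fixed.mp hp
  have : g x = (x - ⟪x, u⟫ • u) - ⟪x, u⟫ • u := by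
    have hx : x = (x - ⟪x, u⟫ • u) + ⟪x, u⟫ • u := by module
    calc g x = g ((x - ⟪x, u⟫ • u) + ⟪x, u⟫ • u) := by rw [← hx]
    _ = g (x - ⟪x, u⟫ • u) + ⟪x, u⟫ • g u := by rw [map_add, map_smul]
    _ = (x - ⟪x, u⟫ • u) - ⟪x, u⟫ • u := by rw [hgp, hgu]; module
  rw [this, rofl_apply hu]
  module

end Stmt11
end
section
open RealInnerProductSpace
namespace Stmt11
variable {n : ℕ}

def Phi (W : Subgroup (Orth n)) : Set (Euc n) := {u | ‖u‖ = 1 ∧ rofl u ∈ W}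

def PhiP (W : Subgroup (Orth n)) (v₀ : Euc n) : Set (Euc n) :=
  {u ∈ Phi W | 0 < ⟪v₀, u⟫}

variable {W : Subgroup (Orth n)} {v₀ : Euc n}

lemma Phi.norm {u : Euc n} (h : u ∈ Phi W) : ‖u‖ = 1 := h.1
lemma Phi.mem {u : Euc n} (h : u ∈ Phi W) : rofl u ∈ W := h.2

lemma phi_neg {u : Euc n} (h : u ∈ Phi W) : -u ∈ Phi W :=
  ⟨by rw [norm_neg]; exact h.1, by rw [rofl_neg]; exact h.2⟩

lemma phi_stable {g : Orth n} (hg : g ∈ W) {u : Euc n} (h : u ∈ Phi W) :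
    g u ∈ Phi W := by
  refine ⟨by rw [g.norm_map]; exact h.1, ?_⟩
  rw [rofl_conj g h.1]
  exact W.mul_mem (W.mul_mem hg h.2) (W.inv_mem hg)

lemma rofl_eq_pm {u u' : Euc n} (hu : ‖u‖ = 1) (hu' : ‖u'‖ = 1)
    (h : rofl u = rofl u') : u' = u ∨ u' = -u := by
  have h1 : rofl u u' = -u' := by rw [h, rofl_self hu']
  rw [rofl_apply hu] at h1
  have h2 : u' = ⟪u', u⟫ • u := by
    linear_combination (norm := module) ((2:ℝ)⁻¹ • h1)
  set c := ⟪u', u⟫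
  have hc : |c| = 1 := by
    have := congrArg norm h2
    rw [norm_smul, hu, mul_one, Real.norm_eq_abs, hu'] at this
    exact this.symm
  rcases abs_eq (by norm_num : (0:ℝ) ≤ 1) |>.mp hc with h3 | h3
  · left; rw [h2, h3, one_smul]
  · right; rw [h2, h3]; module

section WithHyp
variable [Finite W] (hv₀ : ∀ g ∈ W, g ≠ 1 → g • v₀ ≠ v₀)

include hv₀ in
lemma inner_v0_ne {u : Euc n} (h : u ∈ Phi W) : ⟪v₀, u⟫ ≠ 0 := by
  intro h0
  have := hv₀ (rofl u) h.2 (rofl_ne_one h.1)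
  apply this
  show rofl u v₀ = v₀
  exact rofl_fix h.1 (by rw [real_inner_comm] at h0 ⊢; exact h0)

include hv₀ in
lemma phi_dichotomy {u : Euc n} (h : u ∈ Phi W) :
    u ∈ PhiP W v₀ ∨ -u ∈ PhiP W v₀ := by
  rcases lt_or_gt_of_ne (inner_v0_ne hv₀ h) with h1 | h1
  · right; exact ⟨phi_neg h, by rw [inner_neg_right]; linarith⟩
  · left; exact ⟨h, h1⟩

include hv₀ in
lemma phi_finite : (Phi W).Finite := by
  classical
  set f : Euc n → Orth n × Bool := fun u => (rofl u, decide (0 < ⟪v₀, u⟫)) with hf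
  apply Set.Finite.of_finite_image (f := f)
  · apply Set.Finite.subset (Set.Finite.prod
      (Set.Finite.image (fun w : W => (w : Orth n)) Set.finite_univ) (Set.finite_univ))
    rintro ⟨g, b⟩ ⟨u, hu, heq⟩
    rw [hf] at heq
    simp only [Prod.mk.injEq] at heq
    constructor
    · exact ⟨⟨rofl u, hu.2⟩, Set.mem_univ _, heq.1⟩
    · exact Set.mem_univ _
  · intro u hu u' hu' heq
    rw [hf] at heq
    simp only [Prod.mk.injEq, decide_eq_decide] at heq
    obtain ⟨h1, h2⟩ := heq
    rcases rofl_eq_pm hu.1 hu'.1 h1 with h3 | h3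
    · exact h3.symm
    · exfalso
      have hne := inner_v0_ne hv₀ hu
      have hval : ⟪v₀, u'⟫ = -⟪v₀, u⟫ := by rw [h3, inner_neg_right]
      rcases lt_or_gt_of_ne hne with h4 | h4
      · have : 0 < ⟪v₀, u'⟫ := by rw [hval]; linarith
        have := h2.mpr this
        linarith
      · have h5 := h2.mp h4
        rw [hval] at h5
        linarith

end WithHyp
end Stmt11
end
section
open RealInnerProductSpace
namespace Stmt11
variable {n : ℕ} {W : Subgroup (Orth n)} {v₀ : Euc n}

set_option maxHeartbeats 2000000 in
lemma exists_simple [Finite W] (hv₀ : ∀ g ∈ W, g ≠ 1 → g • v₀ ≠ v₀)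
    (hgenW : Subgroup.closure {g : Orth n | g ∈ W ∧ IsReflection g} = W) :
    ∃ Δ : Finset (Euc n), (∀ γ ∈ Δ, γ ∈ PhiP W v₀) ∧
      (∀ α ∈ Δ, ∀ u, u ∈ PhiP W v₀ → u ≠ α → rofl α u ∈ PhiP W v₀) ∧
      (∀ w ∈ W, ∃ L : List (Euc n), (∀ γ ∈ L, γ ∈ Δ) ∧ (L.map rofl).prod = w) := by
  classical
  have hPfin : (PhiP W v₀).Finite :=
    (phi_finite hv₀).subset (fun u hu => hu.1)
  set P : Finset (Euc n) := hPfin.toFinset with hPdef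
  have hP : ∀ u, u ∈ P ↔ u ∈ PhiP W v₀ := fun u => Set.Finite.mem_toFinset _
  -- the "generates" predicate
  set Gen : Finset (Euc n) → Prop := fun Δ =>
    ∀ u ∈ P, ∃ c : Euc n → ℝ, (∀ γ ∈ Δ, 0 ≤ c γ) ∧ u = ∑ γ ∈ Δ, c γ • γ with hGenDef
  have hGenP : Gen P := by
    intro u hu
    refine ⟨fun γ => if γ = u then 1 else 0, fun γ _ => by positivity, ?_⟩
    have : ∀ γ ∈ P, (if γ = u then (1:ℝ) else 0) • γ = if γ = u then u else 0 := by
      intro γ _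
      by_cases h : γ = u <;> simp [h]
    rw [Finset.sum_congr rfl this, Finset.sum_ite_eq' P u (fun _ => u), if_pos hu]
  -- choose a minimal generating set
  obtain ⟨Δ, hΔS, hmin⟩ := Finset.exists_min_image
    (P.powerset.filter Gen) Finset.card
    ⟨P, by rw [Finset.mem_filter]; exact ⟨Finset.mem_powerset_self P, hGenP⟩⟩
  rw [Finset.mem_filter, Finset.mem_powerset] at hΔS
  obtain ⟨hΔP, hGen⟩ := hΔS
  have hΔPhiP : ∀ γ ∈ Δ, γ ∈ PhiP W v₀ := fun γ hγ => (hP γ).mp (hΔP hγ)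
  have hminimal : ∀ β ∈ Δ, ¬ Gen (Δ.erase β) := by
    intro β hβ hGenE
    have hmem : Δ.erase β ∈ P.powerset.filter Gen := by
      rw [Finset.mem_filter, Finset.mem_powerset]
      exact ⟨(Finset.erase_subset _ _).trans hΔP, hGenE⟩
    have := hmin _ hmem
    have hcard : (Δ.erase β).card < Δ.card := Finset.card_erase_lt_of_mem hβ
    omega
  -- absorption
  have habsorb : ∀ β ∈ Δ, ∀ d : Euc n → ℝ, (∀ γ ∈ Δ.erase β, 0 ≤ d γ) →
      β = ∑ γ ∈ Δ.erase β, d γ • γ → False := by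
    intro β hβ d hd hrep
    apply hminimal β hβ
    intro u hu
    obtain ⟨c, hc, hcu⟩ := hGen u hu
    refine ⟨fun γ => c γ + c β * d γ, ?_, ?_⟩
    · intro γ hγ
      have := hc γ (Finset.mem_of_mem_erase hγ)
      have := hc β hβ
      have := hd γ hγ
      positivity
    · have hstep : ∀ t : ℝ, t • β = ∑ γ ∈ Δ.erase β, (t * d γ) • γ := by
        intro t
        conv_lhs => rw [hrep]
        rw [Finset.smul_sum]
        exact Finset.sum_congr rfl fun γ _ => smul_smul _ _ _
      rw [hcu, ← Finset.sum_erase_add Δ _ hβ, hstep (c β), ← Finset.sum_add_distrib]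
      exact Finset.sum_congr rfl fun γ _ => (add_smul _ _ _).symm
  -- helper facts
  have hPpos : ∀ γ ∈ P, 0 < ⟪v₀, γ⟫ := fun γ hγ => ((hP γ).mp hγ).2
  have hPphi : ∀ γ ∈ P, γ ∈ Phi W := fun γ hγ => ((hP γ).mp hγ).1
  have hΔpos : ∀ γ ∈ Δ, 0 < ⟪v₀, γ⟫ := fun γ hγ => hPpos γ (hΔP hγ)
  have hΔnorm : ∀ γ ∈ Δ, ‖γ‖ = 1 := fun γ hγ => (hPphi γ (hΔP hγ)).1
  have hite : ∀ (s : Finset (Euc n)) (x : Euc n), x ∈ s → ∀ r : ℝ,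
      ∑ γ ∈ s, (if γ = x then r else 0) • γ = r • x := by
    intro s x hx r
    rw [Finset.sum_congr rfl (fun γ _ => show (if γ = x then r else 0) • γ =
        if γ = x then r • γ else 0 by by_cases h : γ = x <;> simp [h]),
      Finset.sum_ite_eq' s x (fun γ => r • γ), if_pos hx]
  have hv0sum : ∀ (s : Finset (Euc n)) (c : Euc n → ℝ),
      ⟪v₀, ∑ γ ∈ s, c γ • γ⟫ = ∑ γ ∈ s, c γ * ⟪v₀, γ⟫ := by
    intro s c
    rw [inner_sum]
    exact Finset.sum_congr rfl fun γ _ => real_inner_smul_right _ _ _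
  -- pairwise nonpositive inner products among Δ
  have hpair : ∀ α ∈ Δ, ∀ β ∈ Δ, α ≠ β → ⟪α, β⟫ ≤ 0 := by
    intro α hα β hβ hne
    by_contra hpos
    push_neg at hpos
    have hαn : ‖α‖ = 1 := hΔnorm α hα
    have hβn : ‖β‖ = 1 := hΔnorm β hβ
    set σ := rofl α β with hσdef
    have hσformula : σ = β - (2 * ⟪α, β⟫) • α := by
      rw [hσdef, rofl_apply hαn, real_inner_comm β α]
    have hσPhi : σ ∈ Phi W := phi_stable (hPphi α (hΔP hα)).2 (hPphi β (hΔP hβ))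
    rcases phi_dichotomy hv₀ hσPhi with hσP | hσP
    · obtain ⟨c, hc, hcσ⟩ := hGen σ ((hP σ).mpr hσP)
      have heq2 : β = (2*⟪α, β⟫) • α + (∑ γ ∈ Δ.erase β, c γ • γ + c β • β) := by
        rw [Finset.sum_erase_add Δ _ hβ, ← hcσ, hσformula]; module
      by_cases hcb : c β < 1
      · have h1mb : 0 < 1 - c β := by linarith
        apply habsorb β hβ
          (fun γ => (1 - c β)⁻¹ * (c γ + if γ = α then 2*⟪α, β⟫ else 0)) ?_ ?_
        · intro γ hγ
          have h1 := hc γ (Finset.mem_of_mem_erase hγ)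
          have h2 : (0:ℝ) ≤ if γ = α then 2*⟪α, β⟫ else 0 := by
            by_cases h : γ = α
            · rw [if_pos h]; linarith
            · rw [if_neg h]
          positivity
        · have hαe : α ∈ Δ.erase β := Finset.mem_erase_of_ne_of_mem hne hα
          have hsum : (1 - c β) • β = ∑ γ ∈ Δ.erase β, (c γ + if γ = α then 2*⟪α, β⟫ else 0) • γ := by
            rw [Finset.sum_congr rfl (fun γ _ => add_smul (c γ) _ γ),
              Finset.sum_add_distrib, hite _ α hαe (2*⟪α, β⟫)]
            linear_combination (norm := module) heq2
          have h5 := congrArg (fun z => (1 - c β)⁻¹ • z) hsum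
          simp only [smul_smul, inv_mul_cancel₀ (ne_of_gt h1mb), one_smul, Finset.smul_sum] at h5
          exact h5.trans (Finset.sum_congr rfl fun γ _ => by simp only [smul_smul])
      · have hv := congrArg (fun z => ⟪v₀, z⟫) heq2
        simp only [inner_add_right, real_inner_smul_right, hv0sum] at hv
        have hsumnn : 0 ≤ ∑ γ ∈ Δ.erase β, c γ * ⟪v₀, γ⟫ :=
          Finset.sum_nonneg fun γ hγ => mul_nonneg (hc γ (Finset.mem_of_mem_erase hγ))
            (le_of_lt (hΔpos γ (Finset.mem_of_mem_erase hγ)))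
        have h1 := hΔpos α hα
        have h2 := hΔpos β hβ
        nlinarith [hv]
    · obtain ⟨c, hc, hcσ⟩ := hGen (-σ) ((hP (-σ)).mpr hσP)
      have heq2 : (2*⟪α, β⟫) • α = β + (∑ γ ∈ Δ.erase α, c γ • γ + c α • α) := by
        rw [Finset.sum_erase_add Δ _ hα, ← hcσ, hσformula]; module
      by_cases hca : c α < 2*⟪α, β⟫
      · have h1mb : 0 < 2*⟪α, β⟫ - c α := by linarith
        apply habsorb α hα
          (fun γ => (2*⟪α, β⟫ - c α)⁻¹ * (c γ + if γ = β then 1 else 0)) ?_ ?_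
        · intro γ hγ
          have h1 := hc γ (Finset.mem_of_mem_erase hγ)
          have h2 : (0:ℝ) ≤ if γ = β then 1 else 0 := by
            by_cases h : γ = β
            · rw [if_pos h]; norm_num
            · rw [if_neg h]
          positivity
        · have hβe : β ∈ Δ.erase α := Finset.mem_erase_of_ne_of_mem (Ne.symm hne) hβ
          have hsum : (2*⟪α, β⟫ - c α) • α = ∑ γ ∈ Δ.erase α, (c γ + if γ = β then 1 else 0) • γ := by
            rw [Finset.sum_congr rfl (fun γ _ => add_smul (c γ) _ γ),
              Finset.sum_add_distrib, hite _ β hβe 1, one_smul]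
            linear_combination (norm := module) heq2
          have h5 := congrArg (fun z => (2*⟪α, β⟫ - c α)⁻¹ • z) hsum
          simp only [smul_smul, inv_mul_cancel₀ (ne_of_gt h1mb), one_smul, Finset.smul_sum] at h5
          exact h5.trans (Finset.sum_congr rfl fun γ _ => by simp only [smul_smul])
      · have hv := congrArg (fun z => ⟪v₀, z⟫) heq2
        simp only [inner_add_right, real_inner_smul_right, hv0sum] at hv
        have hsumnn : 0 ≤ ∑ γ ∈ Δ.erase α, c γ * ⟪v₀, γ⟫ :=
          Finset.sum_nonneg fun γ hγ => mul_nonneg (hc γ (Finset.mem_of_mem_erase hγ))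
            (le_of_lt (hΔpos γ (Finset.mem_of_mem_erase hγ)))
        have h1 := hΔpos α hα
        have h2 := hΔpos β hβ
        nlinarith [hv]
  -- linear independence of Δ
  have hindep : ∀ a : Euc n → ℝ, ∑ γ ∈ Δ, a γ • γ = 0 → ∀ γ ∈ Δ, a γ = 0 := by
    intro a hsum0
    set Pos := Δ.filter (fun γ => 0 < a γ) with hPosDef
    set Neg := Δ.filter (fun γ => a γ < 0) with hNegDef
    set σ := ∑ γ ∈ Pos, a γ • γ with hσDef
    have hsplit : σ + ∑ γ ∈ Neg, a γ • γ = 0 := by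
      rw [hσDef]
      have h1 : ∑ γ ∈ Neg, a γ • γ = ∑ γ ∈ Δ.filter (fun γ => ¬ 0 < a γ), a γ • γ := by
        apply Finset.sum_subset
        · intro x hx
          rw [Finset.mem_filter] at hx ⊢
          exact ⟨hx.1, by linarith [hx.2]⟩
        · intro x hx hnx
          rw [Finset.mem_filter] at hx
          rw [hNegDef, Finset.mem_filter] at hnx
          have h0 : a x = 0 :=
            le_antisymm (not_lt.mp hx.2) (not_lt.mp (not_and.mp hnx hx.1))
          rw [h0, zero_smul]
      rw [h1, Finset.sum_filter_add_sum_filter_not Δ _ _, hsum0]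
    have hστ : σ = ∑ γ ∈ Neg, (-(a γ)) • γ := by
      have hh : ∑ γ ∈ Neg, (-(a γ)) • γ = -∑ γ ∈ Neg, a γ • γ := by
        rw [← Finset.sum_neg_distrib]
        exact Finset.sum_congr rfl fun γ _ => neg_smul (a γ) γ
      rw [hh]
      linear_combination (norm := module) hsplit
    have hinner : ⟪σ, σ⟫ ≤ 0 := by
      nth_rewrite 2 [hστ]
      rw [hσDef, sum_inner]
      apply Finset.sum_nonpos
      intro γ hγ
      rw [real_inner_smul_left, inner_sum]
      have hγΔ : γ ∈ Δ := Finset.mem_of_mem_filter γ hγ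
      have hγpos : 0 < a γ := (Finset.mem_filter.mp hγ).2
      apply mul_nonpos_of_nonneg_of_nonpos (le_of_lt hγpos)
      apply Finset.sum_nonpos
      intro δ hδ
      rw [real_inner_smul_right]
      have hδΔ : δ ∈ Δ := Finset.mem_of_mem_filter δ hδ
      have hδneg : a δ < 0 := (Finset.mem_filter.mp hδ).2
      have hneq : γ ≠ δ := fun h => by rw [h] at hγpos; linarith
      have := hpair γ hγΔ δ hδΔ hneq
      nlinarith
    have hσ0 : σ = 0 := by
      exact real_inner_self_nonpos.mp hinner
    have hPose : Pos = ∅ := by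
      by_contra hne
      have hnes := Finset.nonempty_of_ne_empty hne
      have hpos : 0 < ⟪v₀, σ⟫ := by
        rw [hσDef, hv0sum]
        apply Finset.sum_pos
        · intro γ hγ
          exact mul_pos (Finset.mem_filter.mp hγ).2 (hΔpos γ (Finset.mem_of_mem_filter γ hγ))
        · exact hnes
      rw [hσ0, inner_zero_right] at hpos
      linarith
    have hNege : Neg = ∅ := by
      by_contra hne
      have hnes := Finset.nonempty_of_ne_empty hne
      have hpos : 0 < ⟪v₀, ∑ γ ∈ Neg, (-(a γ)) • γ⟫ := by
        rw [hv0sum]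
        apply Finset.sum_pos
        · intro γ hγ
          have := (Finset.mem_filter.mp hγ).2
          exact mul_pos (by linarith) (hΔpos γ (Finset.mem_of_mem_filter γ hγ))
        · exact hnes
      rw [← hστ, hσ0, inner_zero_right] at hpos
      linarith
    intro γ hγ
    have h1 : γ ∉ Pos := by rw [hPose]; exact Finset.notMem_empty γ
    have h2 : γ ∉ Neg := by rw [hNege]; exact Finset.notMem_empty γ
    rw [hPosDef, Finset.mem_filter] at h1
    rw [hNegDef, Finset.mem_filter] at h2
    have h3 := not_and.mp h1 hγ
    have h4 := not_and.mp h2 hγ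
    push_neg at h3 h4
    linarith
  -- property (d) : simple reflections permute the other positive roots
  have hd : ∀ α ∈ Δ, ∀ u, u ∈ PhiP W v₀ → u ≠ α → rofl α u ∈ PhiP W v₀ := by
    intro α hα u huP hne
    have hαn : ‖α‖ = 1 := hΔnorm α hα
    have hun : ‖u‖ = 1 := huP.1.1
    obtain ⟨c, hc, hcu⟩ := hGen u ((hP u).mpr huP)
    have hγ0 : ∃ γ₀, γ₀ ∈ Δ ∧ γ₀ ≠ α ∧ 0 < c γ₀ := by
      by_contra hcon
      push_neg at hcon
      have huca : u = c α • α := by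
        rw [hcu, ← Finset.sum_erase_add Δ _ hα]
        have hz : ∀ γ ∈ Δ.erase α, c γ • γ = 0 := by
          intro γ hγ
          have h1 := hc γ (Finset.mem_of_mem_erase hγ)
          have h2 := hcon γ (Finset.mem_of_mem_erase hγ) (Finset.ne_of_mem_erase hγ)
          rw [le_antisymm h2 h1, zero_smul]
        rw [Finset.sum_eq_zero hz, zero_add]
      have hca_pos : 0 < c α := by
        have hvpos : 0 < ⟪v₀, u⟫ := huP.2
        rw [huca, real_inner_smul_right] at hvpos
        have := hΔpos α hα
        nlinarith
      have hca1 : c α = 1 := by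
        have := congrArg norm huca
        rw [hun, norm_smul, hαn, mul_one, Real.norm_eq_abs, abs_of_pos hca_pos] at this
        linarith
      apply hne
      rw [huca, hca1, one_smul]
    obtain ⟨γ₀, hγ₀Δ, hγ₀ne, hγ₀pos⟩ := hγ0
    have hvPhi : rofl α u ∈ Phi W := phi_stable (hPphi α (hΔP hα)).2 huP.1
    rcases phi_dichotomy hv₀ hvPhi with h | h
    · exact h
    exfalso
    obtain ⟨d, hdnn, hdv⟩ := hGen (-(rofl α u)) ((hP _).mpr h)
    have hveq : rofl α u = u - (2*⟪u,α⟫) • α := rofl_apply hαn u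
    have hzero : ∑ γ ∈ Δ, ((c γ + d γ) - (if γ = α then 2*⟪u,α⟫ else 0)) • γ = 0 := by
      rw [Finset.sum_congr rfl (fun γ _ => by rw [sub_smul, add_smul]),
        Finset.sum_sub_distrib, Finset.sum_add_distrib, ← hcu, ← hdv, hite Δ α hα]
      linear_combination (norm := module) -hveq
    have hco := hindep _ hzero γ₀ hγ₀Δ
    rw [if_neg hγ₀ne] at hco
    have := hdnn γ₀ hγ₀Δ
    linarith
  -- general inner-sum helper
  have hsumR : ∀ (x : Euc n) (s : Finset (Euc n)) (c : Euc n → ℝ),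
      ⟪x, ∑ γ ∈ s, c γ • γ⟫ = ∑ γ ∈ s, c γ * ⟪x, γ⟫ := by
    intro x s c
    rw [inner_sum]
    exact Finset.sum_congr rfl fun γ _ => real_inner_smul_right _ _ _
  -- chosen coefficients and height function
  set cf : Euc n → Euc n → ℝ := fun u =>
    if hu : u ∈ P then Classical.choose (hGen u hu) else 0 with hcfDef
  have hcf : ∀ u (hu : u ∈ P), (∀ γ ∈ Δ, 0 ≤ cf u γ) ∧ u = ∑ γ ∈ Δ, cf u γ • γ := by
    intro u hu
    simp only [hcfDef, dif_pos hu]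
    exact Classical.choose_spec (hGen u hu)
  set ht : Euc n → ℝ := fun u => ∑ γ ∈ Δ, cf u γ with htDef
  -- height decreases
  have hstep : ∀ u, ∀ (hu : u ∈ P), ∀ β ∈ Δ, 0 < ⟪u, β⟫ → u ≠ β →
      rofl β u ∈ P ∧ ht (rofl β u) < ht u := by
    intro u hu β hβ hub hne
    have hβn : ‖β‖ = 1 := hΔnorm β hβ
    have hvP : rofl β u ∈ P := (hP _).mpr (hd β hβ u ((hP u).mp hu) hne)
    refine ⟨hvP, ?_⟩
    have hveq : rofl β u = u - (2*⟪u,β⟫) • β := rofl_apply hβn u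
    have hzero : ∑ γ ∈ Δ, (cf (rofl β u) γ - (cf u γ - (if γ = β then 2*⟪u,β⟫ else 0))) • γ
        = 0 := by
      rw [Finset.sum_congr rfl (fun γ _ => by rw [sub_smul, sub_smul]),
        Finset.sum_sub_distrib, Finset.sum_sub_distrib, ← (hcf u hu).2,
        ← (hcf _ hvP).2, hite Δ β hβ]
      linear_combination (norm := module) hveq
    have hco := hindep _ hzero
    have hhtv : ht (rofl β u) = ht u - 2*⟪u,β⟫ := by
      simp only [htDef]
      have : ∀ γ ∈ Δ, cf (rofl β u) γ = cf u γ - (if γ = β then 2*⟪u,β⟫ else 0) := by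
        intro γ hγ
        have := hco γ hγ
        linarith [this]
      rw [Finset.sum_congr rfl this, Finset.sum_sub_distrib,
        Finset.sum_ite_eq' Δ β (fun _ => 2*⟪u,β⟫), if_pos hβ]
    rw [hhtv]
    linarith
  -- every positive root's reflection lies in the subgroup generated by Δ's reflections
  set S : Set (Orth n) := {g | ∃ γ ∈ Δ, g = rofl γ} with hSdef
  set W' : Subgroup (Orth n) := Subgroup.closure S with hW'def
  have hroflΔ : ∀ γ ∈ Δ, rofl γ ∈ W' := fun γ hγ =>
    Subgroup.subset_closure ⟨γ, hγ, rfl⟩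
  have hallP : ∀ u ∈ P, rofl u ∈ W' := by
    suffices H : ∀ k, ∀ u, ∀ hu : u ∈ P,
        (P.filter (fun x => ht x < ht u)).card < k → rofl u ∈ W' by
      intro u hu
      exact H ((P.filter (fun x => ht x < ht u)).card + 1) u hu (by omega)
    intro k
    induction k with
    | zero => intro u hu h; omega
    | succ k ih =>
      intro u hu hcard
      have hun : ‖u‖ = 1 := (hPphi u hu).1
      -- find β ∈ Δ with cf u β * ⟪u,β⟫ > 0
      have h1 : (1:ℝ) = ∑ γ ∈ Δ, cf u γ * ⟪u, γ⟫ := by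
        have h2 : ⟪u, u⟫ = 1 := by rw [real_inner_self_eq_norm_sq, hun]; norm_num
        rw [← h2]
        nth_rewrite 2 [(hcf u hu).2]
        rw [hsumR]
      obtain ⟨β, hβ, hβpos⟩ : ∃ β ∈ Δ, 0 < cf u β * ⟪u, β⟫ := by
        by_contra hcon
        push_neg at hcon
        have := Finset.sum_nonpos hcon
        rw [← h1] at this
        linarith
      have hcfpos : 0 < ⟪u, β⟫ := by
        rcases lt_trichotomy ⟪u, β⟫ 0 with h | h | h
        · exfalso
          have := (hcf u hu).1 β hβ
          nlinarith
        · exfalso; rw [h, mul_zero] at hβpos; linarith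
        · exact h
      by_cases heq : u = β
      · rw [heq]; exact hroflΔ β hβ
      · obtain ⟨hvP, hhtlt⟩ := hstep u hu β hβ hcfpos heq
        have hmv : (P.filter (fun x => ht x < ht (rofl β u))).card <
            (P.filter (fun x => ht x < ht u)).card := by
          apply Finset.card_lt_card
          rw [Finset.ssubset_iff_of_subset]
          · exact ⟨rofl β u, Finset.mem_filter.mpr ⟨hvP, hhtlt⟩,
              fun hmem => lt_irrefl _ (Finset.mem_filter.mp hmem).2⟩
          · intro x hx
            rw [Finset.mem_filter] at hx ⊢
            exact ⟨hx.1, lt_trans hx.2 hhtlt⟩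
        have hvW' : rofl (rofl β u) ∈ W' := ih (rofl β u) hvP (by omega)
        have hβn : ‖β‖ = 1 := hΔnorm β hβ
        have hconj : rofl (rofl β u) = rofl β * rofl u * (rofl β)⁻¹ :=
          rofl_conj (rofl β) hun
        have : rofl u = (rofl β)⁻¹ * rofl (rofl β u) * rofl β := by
          rw [hconj]; group
        rw [this]
        exact W'.mul_mem (W'.mul_mem (W'.inv_mem (hroflΔ β hβ)) hvW') (hroflΔ β hβ)
  -- W is contained in W'
  have hWW' : ∀ w ∈ W, w ∈ W' := by
    have hle : Subgroup.closure {g : Orth n | g ∈ W ∧ IsReflection g} ≤ W' := by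
      apply (Subgroup.closure_le _).mpr
      intro g hg
      obtain ⟨u, hun, rfl⟩ := isReflection_exists hg.2
      have huPhi : u ∈ Phi W := ⟨hun, hg.1⟩
      rcases phi_dichotomy hv₀ huPhi with h | h
      · exact hallP u ((hP u).mpr h)
      · rw [← rofl_neg u]
        exact hallP (-u) ((hP (-u)).mpr h)
    intro w hw
    rw [← hgenW] at hw
    exact hle hw
  -- produce lists
  refine ⟨Δ, hΔPhiP, hd, ?_⟩
  intro w hw
  have hw' : w ∈ Subgroup.closure S := hWW' w hw
  clear hw
  induction hw' using Subgroup.closure_induction with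
  | mem g hg =>
    obtain ⟨γ, hγ, rfl⟩ := hg
    exact ⟨[γ], by simpa using hγ, by simp⟩
  | one => exact ⟨[], by simp, by simp⟩
  | mul g h _ _ ihg ihh =>
    obtain ⟨L1, hL1, hp1⟩ := ihg
    obtain ⟨L2, hL2, hp2⟩ := ihh
    refine ⟨L1 ++ L2, ?_, ?_⟩
    · intro γ hγ
      rcases List.mem_append.mp hγ with h | h
      · exact hL1 γ h
      · exact hL2 γ h
    · rw [List.map_append, List.prod_append, hp1, hp2]
  | inv g _ ihg =>
    obtain ⟨L, hL, hp⟩ := ihg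
    refine ⟨L.reverse, fun γ hγ => hL γ (List.mem_reverse.mp hγ), ?_⟩
    rw [← hp]
    clear hp
    induction L with
    | nil => simp
    | cons γ L ihL =>
      have hγΔ : γ ∈ Δ := hL γ List.mem_cons_self
      have hLsub : ∀ x ∈ L, x ∈ Δ := fun x hx => hL x (List.mem_cons_of_mem γ hx)
      rw [List.reverse_cons, List.map_append, List.prod_append, List.map_cons,
        List.prod_cons, List.map_nil, List.prod_nil, mul_one, ihL hLsub,
        List.map_cons, List.prod_cons, mul_inv_rev, rofl_inv (hΔnorm γ hγΔ)]

end Stmt11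
end
section
open RealInnerProductSpace
namespace Stmt11
variable {n : ℕ} {W : Subgroup (Orth n)} {v₀ : Euc n}

lemma mul_apply (g h : Orth n) (x : Euc n) : (g * h) x = g (h x) := rfl

lemma mem_dirichlet {x : Euc n} :
    x ∈ dirichletDomain n W v₀ ↔ ∀ g ∈ W, ⟪x, g v₀⟫ ≤ ⟪x, v₀⟫ := by
  unfold dirichletDomain
  rw [Set.mem_iInter₂]
  rfl

lemma dirichlet_nonneg {x : Euc n} (hx : x ∈ dirichletDomain n W v₀)
    {u : Euc n} (hu : u ∈ PhiP W v₀) : 0 ≤ ⟪x, u⟫ := by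
  have h1 := mem_dirichlet.mp hx (rofl u) hu.1.2
  rw [rofl_apply hu.1.1, inner_sub_right, real_inner_smul_right] at h1
  have h2 : 0 < ⟪v₀, u⟫ := hu.2
  nlinarith

/-- flip search -/
lemma flip_search {X : Type*} (Q : List X → Prop) :
    ∀ M : List X, Q [] → ¬ Q M → ∃ A c B, M = A ++ c :: B ∧ Q B ∧ ¬ Q (c :: B) := by
  intro M
  induction M with
  | nil => intro h1 h2; exact absurd h1 h2
  | cons c M' ih =>
    intro h1 h2
    by_cases h3 : Q M'
    · exact ⟨[], c, M', rfl, h3, h2⟩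
    · obtain ⟨A', c', B', heq, hQ, hnQ⟩ := ih h1 h3
      exact ⟨c :: A', c', B', by rw [heq]; rfl, hQ, hnQ⟩

lemma dirichlet_unique [Finite W] (hv₀ : ∀ g ∈ W, g ≠ 1 → g • v₀ ≠ v₀)
    (hgenW : Subgroup.closure {g : Orth n | g ∈ W ∧ IsReflection g} = W) :
    ∀ x y : Euc n, x ∈ dirichletDomain n W v₀ → y ∈ dirichletDomain n W v₀ →
      ∀ g ∈ W, g • x = y → y = x := by
  obtain ⟨Δ, hΔ, hd, hlist⟩ := exists_simple hv₀ hgenW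
  have hΔW : ∀ γ ∈ Δ, rofl γ ∈ W := fun γ hγ => (hΔ γ hγ).1.2
  have hΔn : ∀ γ ∈ Δ, ‖γ‖ = 1 := fun γ hγ => (hΔ γ hγ).1.1
  suffices H : ∀ k : ℕ, ∀ L : List (Euc n), L.length ≤ k → (∀ γ ∈ L, γ ∈ Δ) →
      ∀ x y : Euc n, x ∈ dirichletDomain n W v₀ → y ∈ dirichletDomain n W v₀ →
      (L.map rofl).prod • x = y → y = x by
    intro x y hx hy g hg hgxy
    obtain ⟨L, hLΔ, hLprod⟩ := hlist g hg
    exact H L.length L le_rfl hLΔ x y hx hy (by rw [hLprod]; exact hgxy)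
  intro k
  induction k using Nat.strong_induction_on with
  | _ k ih =>
  intro L hlen hLΔ x y hx hy hprod
  rcases List.eq_nil_or_concat L with rfl | ⟨M, α, rfl⟩
  · simp only [List.map_nil, List.prod_nil] at hprod
    rw [one_smul] at hprod
    exact hprod.symm
  · simp only [List.concat_eq_append] at hlen hLΔ hprod
    have hαΔ : α ∈ Δ := hLΔ α (by simp)
    have hMΔ : ∀ γ ∈ M, γ ∈ Δ := fun γ hγ => hLΔ γ (by simp [hγ])
    have hαn : ‖α‖ = 1 := hΔn α hαΔ
    have hαP : α ∈ PhiP W v₀ := hΔ α hαΔ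
    set w : Orth n := ((M ++ [α]).map rofl).prod with hwdef
    have hwsplit : w = (M.map rofl).prod * rofl α := by
      rw [hwdef, List.map_append, List.prod_append]
      simp
    have hwW : w ∈ W := Subgroup.list_prod_mem _ (by
      intro g hg
      rw [List.mem_map] at hg
      obtain ⟨γ, hγ, rfl⟩ := hg
      exact hΔW γ (hLΔ γ hγ))
    have hzPhi : w α ∈ Phi W := phi_stable hwW hαP.1
    have hprod' : w x = y := hprod
    rcases phi_dichotomy hv₀ hzPhi with hz | hz
    · -- bad case : w α positive, shorten the word by two
      have hQnil : ((([] : List (Euc n)).map rofl).prod) α ∈ PhiP W v₀ := by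
        simpa using hαP
      have hQM : ¬ (((M.map rofl).prod) α ∈ PhiP W v₀) := by
        intro hmem
        have h1 : w α = -(((M.map rofl).prod) α) := by
          rw [hwsplit, mul_apply, rofl_self hαn, map_neg]
        have h2 : ⟪v₀, w α⟫ < 0 := by
          rw [h1, inner_neg_right]
          linarith [hmem.2]
        linarith [hz.2]
      obtain ⟨A, c, B, hMeq, hQB, hQcB⟩ :=
        flip_search (fun T => ((T.map rofl).prod) α ∈ PhiP W v₀) M hQnil hQM
      have hcΔ : c ∈ Δ := hMΔ c (by rw [hMeq]; simp)
      have hBΔ : ∀ γ ∈ B, γ ∈ Δ := fun γ hγ => hMΔ γ (by rw [hMeq]; simp [hγ])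
      have hAΔ : ∀ γ ∈ A, γ ∈ Δ := fun γ hγ => hMΔ γ (by rw [hMeq]; simp [hγ])
      set b : Euc n := ((B.map rofl).prod) α with hbdef
      have hbP : b ∈ PhiP W v₀ := hQB
      have hbc : b = c := by
        by_contra hne
        apply hQcB
        have : (((c :: B).map rofl).prod) α = rofl c b := by
          rw [List.map_cons, List.prod_cons, mul_apply]
        rw [this]
        exact hd c hcΔ b hbP hne
      have hconj : rofl c = (B.map rofl).prod * rofl α * ((B.map rofl).prod)⁻¹ := by
        rw [← hbc] at *
        rw [hbdef]
        exact rofl_conj _ hαn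
      have hwshort : w = ((A ++ B).map rofl).prod := by
        rw [hwdef]
        show ((M ++ [α]).map rofl).prod = _
        rw [hMeq]
        rw [List.map_append, List.prod_append, List.map_append, List.prod_append,
          List.map_cons, List.prod_cons, List.map_append, List.prod_append]
        simp only [List.map_cons, List.map_nil, List.prod_cons, List.prod_nil, mul_one]
        rw [hconj]
        group
        rw [mul_assoc, rofl_mul_self hαn, mul_one]
      have hlenAB : (A ++ B).length < k := by
        have h1 : (M ++ [α]).length ≤ k := hlen
        rw [hMeq] at h1
        simp only [List.length_append, List.length_cons] at h1 ⊢
        omega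
      refine ih (A ++ B).length hlenAB (A ++ B) le_rfl ?_ x y hx hy ?_
      · intro γ hγ
        rcases List.mem_append.mp hγ with h | h
        · exact hAΔ γ h
        · exact hBΔ γ h
      · rw [← hwshort]; exact hprod
    · -- good case : w α negative, x is fixed by rofl α
      have hxα : 0 ≤ ⟪x, α⟫ := dirichlet_nonneg hx hαP
      have hyz : 0 ≤ ⟪y, -(w α)⟫ := dirichlet_nonneg hy hz
      have hinner : ⟪x, α⟫ = ⟪y, w α⟫ := by
        rw [← hprod']
        exact (w.inner_map_map x α).symm
      have hxα0 : ⟪x, α⟫ = 0 := by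
        rw [inner_neg_right] at hyz
        linarith [hinner]
      have hfix : rofl α x = x := rofl_fix hαn hxα0
      have hprodM : ((M.map rofl).prod) • x = y := by
        show ((M.map rofl).prod) x = y
        rw [← hprod', hwsplit, mul_apply, hfix]
      have hlenM : M.length < k := by
        have h1 : (M ++ [α]).length ≤ k := hlen
        simp only [List.length_append, List.length_cons] at h1
        omega
      exact ih M.length hlenM M le_rfl hMΔ x y hx hy hprodM

end Stmt11
end
section
open RealInnerProductSpace
namespace Stmt11
variable {n : ℕ} {W : Subgroup (Orth n)} {v₀ : Euc n}

set_option maxHeartbeats 1000000 in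
lemma dirichlet_exists [Finite W] (v : Euc n) :
    ∃ g ∈ W, g • v ∈ dirichletDomain n W v₀ := by
  haveI := Fintype.ofFinite W
  obtain ⟨g₀, _, hmax⟩ := Finset.exists_max_image (Finset.univ : Finset W)
    (fun g : W => ⟪(g : Orth n) v, v₀⟫) ⟨1, Finset.mem_univ 1⟩
  refine ⟨(g₀ : Orth n), g₀.2, ?_⟩
  rw [mem_dirichlet]
  intro h hh
  have key : ⟪(g₀ : Orth n) v, h v₀⟫ = ⟪(h⁻¹ * (g₀ : Orth n)) v, v₀⟫ := by
    have := (h⁻¹ : Orth n).inner_map_map ((g₀ : Orth n) v) (h v₀)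
    rw [show (h⁻¹ : Orth n) (h v₀) = v₀ from h.symm_apply_apply v₀] at this
    rw [← this, mul_apply]
  show ⟪(g₀ : Orth n) v, h v₀⟫ ≤ ⟪(g₀ : Orth n) v, v₀⟫
  rw [key]
  have h2 := hmax (⟨h⁻¹, W.inv_mem hh⟩ * g₀) (Finset.mem_univ _)
  rw [Subgroup.coe_mul] at h2
  exact h2

lemma dirichlet_closed : IsClosed (dirichletDomain n W v₀) := by
  apply isClosed_biInter
  intro g _
  exact isClosed_le (Continuous.inner continuous_id continuous_const)
    (Continuous.inner continuous_id continuous_const)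

end Stmt11
end

theorem stmt_11 (n : ℕ) (W : Subgroup (Orth n)) [Finite W]
    (hgen : Subgroup.closure {g : Orth n | g ∈ W ∧ IsReflection g} = W)
    (v₀ : Euc n) (hv₀ : ∀ g ∈ W, g ≠ 1 → g • v₀ ≠ v₀) :
    (∀ v : Euc n, ∃! w : Euc n, w ∈ dirichletDomain n W v₀ ∧ ∃ g ∈ W, g • v = w) ∧
    IsHomeomorph (fun w : dirichletDomain n W v₀ =>
      Quotient.mk (MulAction.orbitRel W (Euc n)) (w : Euc n)) := by
  classical
  have huniq := Stmt11.dirichlet_unique hv₀ hgen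
  have hexist : ∀ v : Euc n, ∃ g ∈ W, g • v ∈ dirichletDomain n W v₀ :=
    fun v => Stmt11.dirichlet_exists v
  constructor
  · intro v
    obtain ⟨g, hg, hgΛ⟩ := hexist v
    refine ⟨g • v, ⟨hgΛ, g, hg, rfl⟩, ?_⟩
    rintro w ⟨hwΛ, g', hg', rfl⟩
    refine huniq (g • v) (g' • v) hgΛ hwΛ (g' * g⁻¹)
      (W.mul_mem hg' (W.inv_mem hg)) ?_
    rw [smul_smul, mul_assoc, inv_mul_cancel, mul_one]
  · rw [isHomeomorph_iff_continuous_isClosedMap_bijective]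
    refine ⟨?_, ?_, ?_, ?_⟩
    · exact Continuous.comp continuous_quotient_mk' continuous_subtype_val
    · -- closed map
      intro C hC
      have hΛ : IsClosed (dirichletDomain n W v₀) := Stmt11.dirichlet_closed
      have hD : IsClosed (Subtype.val '' C) :=
        (hΛ.isClosedEmbedding_subtypeVal).isClosedMap C hC
      set D := Subtype.val '' C with hDdef
      have himg : (fun w : dirichletDomain n W v₀ =>
          Quotient.mk (MulAction.orbitRel W (Euc n)) (w : Euc n)) '' C =
          Quotient.mk (MulAction.orbitRel W (Euc n)) '' D := by
        rw [hDdef, Set.image_image]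
      rw [himg]
      have hqm : Topology.IsQuotientMap (Quotient.mk (MulAction.orbitRel W (Euc n))) := by
        letI := MulAction.orbitRel W (Euc n)
        exact isQuotientMap_quotient_mk'
      rw [← hqm.isClosed_preimage]
      have hpre : Quotient.mk (MulAction.orbitRel W (Euc n)) ⁻¹'
          (Quotient.mk (MulAction.orbitRel W (Euc n)) '' D) =
          ⋃ g : W, (fun x => ((g : Orth n)) x) '' D := by
        ext z
        constructor
        · rintro ⟨d, hd, heq⟩
          have hrel := Quotient.exact heq
          obtain ⟨gw, hgw⟩ := hrel
          refine Set.mem_iUnion.mpr ⟨gw⁻¹, d, hd, ?_⟩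
          rw [← hgw]
          show ((gw⁻¹ : W) : Orth n) (((gw : W) : Orth n) z) = z
          exact ((gw : W) : Orth n).symm_apply_apply z
        · intro hz
          obtain ⟨g, d, hd, hdz⟩ := Set.mem_iUnion.mp hz
          refine ⟨d, hd, Quotient.sound ?_⟩
          refine ⟨g⁻¹, ?_⟩
          show ((g⁻¹ : W) : Orth n) z = d
          rw [← hdz]
          exact ((g : W) : Orth n).symm_apply_apply d
      rw [hpre]
      apply isClosed_iUnion_of_finite
      intro g
      exact (((g : Orth n)).toHomeomorph).isClosedMap D hD
    · -- injective
      intro w₁ w₂ heq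
      have hrel := Quotient.exact heq
      obtain ⟨gw, hgw⟩ := hrel
      apply Subtype.ext
      exact huniq (w₂ : Euc n) (w₁ : Euc n) w₂.2 w₁.2 ((gw : Orth n)) gw.2 hgw
    · -- surjective
      intro q
      induction q using Quotient.ind with
      | _ v =>
        obtain ⟨g, hg, hgΛ⟩ := hexist v
        refine ⟨⟨g • v, hgΛ⟩, Quotient.sound ?_⟩
        exact ⟨⟨g, hg⟩, rfl⟩
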